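/- For every real number x with |x| < 2 the series ∑_{j=0}^{∞} A_j·x^j and ∑_{j=0}^{∞} B_j·x^j converge, and ∑_{j=0}^{∞} A_j·x^j = 1/Γ(1+x) while ∑_{j=0}^{∞} B_j·x^j = 2^x/Γ(1+x), where Γ is the Gamma function. -/

import Mathlib

open MeasureTheory Finset Complex FormalMultilinearSeries
open scoped NNReal ENNReal

/-- `c_j = (1/j!)·∫_0^∞ e^{−u}(log u)^j du`, the `j`-th Taylor coefficient of the Gamma
function at `1`. -/
noncomputable def cGamma (j : ℕ) : ℝ :=
  (1 / (Nat.factorial j : ℝ)) * ∫ u in Set.Ioi (0 : ℝ), Real.exp (-u) * (Real.log u) ^ j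


lemma cGamma_zero : cGamma 0 = 1 := by
  simp [cGamma, integral_exp_neg_Ioi_zero, integral_exp_Iic_zero]

lemma expbound_integrable {r : ℝ} (h0 : 0 ≤ r) (h1 : r < 1) :
    IntegrableOn (fun u : ℝ => Real.exp (-u) * Real.exp (r * |Real.log u|))
      (Set.Ioi (0:ℝ)) := by
  have h1' : IntegrableOn (fun u : ℝ => Real.exp (-u) * u ^ r) (Set.Ioi (0:ℝ)) := by
    have := Real.GammaIntegral_convergent (s := r + 1) (by linarith)
    simpa using this
  have h2' : IntegrableOn (fun u : ℝ => Real.exp (-u) * u ^ (-r)) (Set.Ioi (0:ℝ)) := by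
    have := Real.GammaIntegral_convergent (s := 1 - r) (by linarith)
    have e : ∀ u : ℝ, (1 : ℝ) - r - 1 = -r := fun _ => by ring
    simpa [e 0] using this
  refine ((h1'.add h2').mono' ?_ ?_)
  · exact ((Real.measurable_exp.comp measurable_neg).mul
      (Real.measurable_exp.comp (Real.measurable_log.abs.const_mul r))).aestronglyMeasurable
  · filter_upwards [ae_restrict_mem measurableSet_Ioi] with u hu
    have hu0 : (0:ℝ) < u := hu
    have key : Real.exp (r * |Real.log u|) ≤ u ^ r + u ^ (-r) := by
      rcases le_or_gt 1 u with h | h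
      · have : |Real.log u| = Real.log u := abs_of_nonneg (Real.log_nonneg h)
        rw [this, mul_comm, ← Real.rpow_def_of_pos hu0]
        have : (0:ℝ) ≤ u ^ (-r) := (Real.rpow_pos_of_pos hu0 _).le
        linarith
      · have : |Real.log u| = -Real.log u := abs_of_nonpos (Real.log_nonpos hu0.le h.le)
        rw [this, mul_neg, ← neg_mul, mul_comm, ← Real.rpow_def_of_pos hu0]
        have : (0:ℝ) ≤ u ^ r := (Real.rpow_pos_of_pos hu0 _).le
        linarith
    have : Real.exp (-u) * Real.exp (r * |Real.log u|)
        ≤ Real.exp (-u) * u ^ r + Real.exp (-u) * u ^ (-r) := by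
      rw [← mul_add]
      exact mul_le_mul_of_nonneg_left key (Real.exp_pos _).le
    simpa [abs_of_nonneg, Real.norm_eq_abs,
      abs_of_pos (mul_pos (Real.exp_pos _) (Real.exp_pos _))] using this

lemma hasSum_cGamma_complex {z : ℂ} (hz : ‖z‖ < 1) :
    HasSum (fun j : ℕ => (cGamma j : ℂ) * z ^ j) (Complex.Gamma (1 + z)) ∧
    Summable (fun j : ℕ => ‖(cGamma j : ℂ) * z ^ j‖) := by
  set r : ℝ := (‖z‖ + 1) / 2 with hr
  have hz0 : (0:ℝ) ≤ ‖z‖ := norm_nonneg z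
  have hr0 : 0 < r := by positivity
  have hr1 : r < 1 := by simp only [hr]; linarith
  have hzr : ‖z‖ < r := by simp only [hr]; linarith
  set q : ℝ := ‖z‖ / r with hq
  have hq0 : 0 ≤ q := by positivity
  have hq1 : q < 1 := (div_lt_one hr0).2 hzr
  set G : ℝ → ℝ := fun u => Real.exp (-u) * Real.exp (r * |Real.log u|) with hG
  have hGint : IntegrableOn G (Set.Ioi (0:ℝ)) := expbound_integrable hr0.le hr1
  set F : ℕ → ℝ → ℂ := fun j u =>
    (z ^ j / (Nat.factorial j : ℂ)) * ((Real.exp (-u) * (Real.log u) ^ j : ℝ) : ℂ) with hF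
  -- norm bound
  have hnorm : ∀ j : ℕ, ∀ u ∈ Set.Ioi (0:ℝ), ‖F j u‖ ≤ q ^ j * G u := by
    intro j u _
    have : ‖F j u‖ = (‖z‖ ^ j / (Nat.factorial j : ℝ)) *
        (Real.exp (-u) * |Real.log u| ^ j) := by
      rw [hF]
      rw [norm_mul, norm_div, norm_pow, Complex.norm_natCast, Complex.norm_real,
        Real.norm_eq_abs, abs_mul, abs_of_pos (Real.exp_pos (-u)),
        _root_.abs_pow (Real.log u) j]
    rw [this]
    have key : (r * |Real.log u|) ^ j / (Nat.factorial j : ℝ) ≤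
        Real.exp (r * |Real.log u|) :=
      Real.pow_div_factorial_le_exp _ (by positivity) j
    have hzq : ‖z‖ = q * r := (div_mul_cancel₀ ‖z‖ hr0.ne').symm
    calc (‖z‖ ^ j / (Nat.factorial j : ℝ)) * (Real.exp (-u) * |Real.log u| ^ j)
        = q ^ j * (Real.exp (-u) * ((r * |Real.log u|) ^ j / (Nat.factorial j : ℝ))) := by
          rw [hzq, mul_pow, mul_pow]; ring
      _ ≤ q ^ j * (Real.exp (-u) * Real.exp (r * |Real.log u|)) := by
          have := mul_le_mul_of_nonneg_left key (Real.exp_pos (-u)).le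
          have h2 := mul_le_mul_of_nonneg_left this (pow_nonneg hq0 j)
          linarith
      _ = q ^ j * G u := rfl
  have hFmeas : ∀ j : ℕ, AEStronglyMeasurable (F j)
      (volume.restrict (Set.Ioi (0:ℝ))) := by
    intro j
    apply Measurable.aestronglyMeasurable
    exact measurable_const.mul
      (Complex.measurable_ofReal.comp
        ((Real.measurable_exp.comp measurable_neg).mul (Real.measurable_log.pow_const j)))
  have hFint : ∀ j : ℕ, Integrable (F j) (volume.restrict (Set.Ioi (0:ℝ))) := by
    intro j
    refine ((hGint.const_mul (q ^ j)).mono' (hFmeas j) ?_)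
    filter_upwards [ae_restrict_mem measurableSet_Ioi] with u hu
    simpa using hnorm j u hu
  have hFnormint : ∀ j : ℕ, (∫ u in Set.Ioi (0:ℝ), ‖F j u‖) ≤
      q ^ j * ∫ u in Set.Ioi (0:ℝ), G u := by
    intro j
    rw [← integral_const_mul]
    refine integral_mono_of_nonneg ?_ (hGint.const_mul _) ?_
    · filter_upwards with u using norm_nonneg _
    · filter_upwards [ae_restrict_mem measurableSet_Ioi] with u hu using hnorm j u hu
  have hFsum : Summable fun j : ℕ => ∫ u in Set.Ioi (0:ℝ), ‖F j u‖ := by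
    refine Summable.of_nonneg_of_le (fun j => integral_nonneg fun u => norm_nonneg _)
      (fun j => hFnormint j) ?_
    exact (summable_geometric_of_lt_one hq0 hq1).mul_right _
  -- value of each integral
  have hFval : ∀ j : ℕ, (∫ u in Set.Ioi (0:ℝ), F j u) = (cGamma j : ℂ) * z ^ j := by
    intro j
    rw [hF]
    simp only
    rw [integral_const_mul,
      show ∫ a in Set.Ioi (0:ℝ), ((Real.exp (-a) * Real.log a ^ j : ℝ) : ℂ)
          = ((∫ a in Set.Ioi (0:ℝ), Real.exp (-a) * Real.log a ^ j : ℝ) : ℂ) from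
        integral_ofReal (𝕜 := ℂ)]
    rw [cGamma]
    push_cast
    ring
  -- sum of F j u
  have htsum : ∀ᵐ u ∂(volume.restrict (Set.Ioi (0:ℝ))),
      (∑' j, F j u) = (Real.exp (-u) : ℂ) * (u : ℂ) ^ z := by
    filter_upwards [ae_restrict_mem measurableSet_Ioi] with u hu
    have hu0 : (0:ℝ) < u := hu
    have hexp : HasSum (fun j : ℕ => (z * (Real.log u : ℂ)) ^ j / (Nat.factorial j : ℂ))
        (Complex.exp (z * (Real.log u : ℂ))) := by
      rw [Complex.exp_eq_exp_ℂ]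
      exact NormedSpace.expSeries_div_hasSum_exp _
    have h2 : HasSum (fun j : ℕ => F j u)
        ((Real.exp (-u) : ℂ) * Complex.exp (z * (Real.log u : ℂ))) := by
      refine (hexp.mul_left _).congr_fun fun j => ?_
      simp only [hF]
      push_cast
      rw [mul_pow]
      ring
    rw [h2.tsum_eq]
    congr 1
    rw [Complex.cpow_def_of_ne_zero (by exact_mod_cast hu0.ne'), ← Complex.ofReal_log hu0.le,
      mul_comm]
  -- interchange
  have hmain := MeasureTheory.hasSum_integral_of_summable_integral_norm hFint hFsum
  have hGamma : (∫ u in Set.Ioi (0:ℝ), (∑' j, F j u)) = Complex.Gamma (1 + z) := by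
    have hre : 0 < (1 + z).re := by
      have h1 : |z.re| ≤ ‖z‖ := Complex.abs_re_le_norm z
      have h2 := neg_abs_le z.re
      simp only [Complex.add_re, Complex.one_re]
      linarith
    rw [Complex.Gamma_eq_integral hre]
    rw [Complex.GammaIntegral]
    rw [integral_congr_ae htsum]
    refine setIntegral_congr_fun measurableSet_Ioi fun u hu => ?_
    congr 1
    ring_nf
  constructor
  · have := hmain
    rw [hGamma] at this
    exact this.congr_fun fun j => (hFval j).symm
  · refine Summable.of_nonneg_of_le (fun j => norm_nonneg _) (fun j => ?_) hFsum
    rw [← hFval j]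
    exact norm_integral_le_integral_norm _

lemma coeff_eq_of_hasSum {d e : ℕ → ℂ} {F : ℂ → ℂ}
    (hd : ∀ y : ℂ, ‖y‖ < 1/2 → HasSum (fun n => d n * y ^ n) (F y))
    (he : ∀ y : ℂ, ‖y‖ < 1/2 → HasSum (fun n => e n * y ^ n) (F y))
    (hds : Summable (fun n => ‖d n‖ * (1/4 : ℝ) ^ n))
    (hes : Summable (fun n => ‖e n‖ * (1/4 : ℝ) ^ n)) : d = e := by
  have hb : ∀ {y : ℂ}, y ∈ Metric.eball (0 : ℂ) ((1/4 : ℝ≥0) : ℝ≥0∞) → ‖y‖ < 1/2 := by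
    intro y hy
    rw [Metric.mem_eball, edist_zero_right] at hy
    have h2 : ‖y‖₊ < (1/4 : ℝ≥0) := by exact_mod_cast hy
    calc ‖y‖ = ((‖y‖₊ : ℝ≥0) : ℝ) := rfl
      _ < ((1/4 : ℝ≥0) : ℝ) := NNReal.coe_lt_coe.mpr h2
      _ ≤ 1/2 := by norm_num
  have build : ∀ (c : ℕ → ℂ), (∀ y : ℂ, ‖y‖ < 1/2 → HasSum (fun n => c n * y ^ n) (F y)) →
      Summable (fun n => ‖c n‖ * (1/4 : ℝ) ^ n) →
      HasFPowerSeriesOnBall F (ofScalars ℂ c) 0 ((1/4 : ℝ≥0) : ℝ≥0∞) := by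
    intro c hc hcs
    refine ⟨?_, by norm_num, ?_⟩
    · apply le_radius_of_summable_norm
      refine hcs.congr fun n => ?_
      rw [ofScalars_norm]
      norm_num
    · intro y hy
      rw [zero_add]
      have := hc y (hb hy)
      refine this.congr_fun fun n => ?_
      rw [show ((ofScalars ℂ c n) fun _ => y) = c n • y ^ n from ofScalars_apply_eq c y n]
      simp [smul_eq_mul, mul_comm]
  have h1 := (build d hd hds).hasFPowerSeriesAt
  have h2 := (build e he hes).hasFPowerSeriesAt
  exact ofScalars_series_injective ℂ ℂ (h1.eq_formalMultilinearSeries h2)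

/-- Main generic lemma. -/
lemma main_aux (A : ℕ → ℝ) (e : ℕ → ℝ) (φ : ℂ → ℂ)
    (hφ : Differentiable ℂ φ)
    (hA0 : A 0 = 1) (he0 : e 0 = 1)
    (hrec : ∀ j : ℕ, 1 ≤ j → ∑ i ∈ Finset.range (j + 1), A (j - i) * cGamma i = e j)
    (hprod : ∀ y : ℂ, ‖y‖ < 1/2 →
      HasSum (fun n : ℕ => (e n : ℂ) * y ^ n) (φ y * Complex.Gamma (1 + y)))
    (hes : Summable fun n : ℕ => ‖(e n : ℂ)‖ * (1/2 : ℝ) ^ n)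
    (x : ℝ) (hx : |x| < 2) :
    HasSum (fun j : ℕ => ((A j : ℂ)) * (x : ℂ) ^ j) (φ (x : ℂ)) := by
  set p := cauchyPowerSeries φ 0 (3 : ℝ≥0) with hp
  have hball : HasFPowerSeriesOnBall φ p 0 ((3:ℝ≥0) : ℝ≥0∞) :=
    (hφ.differentiableOn).hasFPowerSeriesOnBall (by norm_num)
  set a : ℕ → ℂ := fun n => p.coeff n with ha
  have hmem : ∀ {y : ℂ}, ‖y‖ < 3 → y ∈ Metric.eball (0 : ℂ) ((3:ℝ≥0) : ℝ≥0∞) := by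
    intro y hy
    rw [Metric.mem_eball, edist_zero_right]
    exact_mod_cast ENNReal.coe_lt_coe.mpr (by exact_mod_cast hy)
  have hsum : ∀ y : ℂ, ‖y‖ < 3 → HasSum (fun n => a n * y ^ n) (φ y) := by
    intro y hy
    have := hball.hasSum (hmem hy)
    rw [zero_add] at this
    refine this.congr_fun fun n => ?_
    rw [p.apply_eq_pow_smul_coeff, smul_eq_mul, mul_comm]
  have hanorm : ∀ y : ℂ, ‖y‖ < 3 → Summable fun n => ‖a n * y ^ n‖ := by
    intro y hy
    have hy' : y ∈ Metric.eball (0 : ℂ) p.radius :=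
      lt_of_lt_of_le (EMetric.mem_ball.mp (hmem hy)) (by simpa [EMetric.mem_ball] using hball.r_le)
    refine (p.summable_norm_apply hy').congr fun n => ?_
    rw [p.apply_eq_pow_smul_coeff, smul_eq_mul, mul_comm]
  set d : ℕ → ℂ := fun n => ∑ k ∈ Finset.range (n+1), a k * (cGamma (n - k) : ℂ) with hdd
  have cauchy : ∀ y : ℂ, ‖y‖ < 1/2 →
      HasSum (fun n => d n * y ^ n) (φ y * Complex.Gamma (1 + y)) ∧
      Summable (fun n => ‖d n * y ^ n‖) := by
    intro y hy
    have hy3 : ‖y‖ < 3 := by linarith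
    have hy1 : ‖y‖ < 1 := by linarith
    have hf := hanorm y hy3
    have hg := (hasSum_cGamma_complex hy1).2
    have hterm : ∀ n : ℕ, (∑ k ∈ Finset.range (n+1),
        (a k * y ^ k) * ((cGamma (n - k) : ℂ) * y ^ (n - k))) = d n * y ^ n := by
      intro n
      rw [hdd]
      simp only
      rw [Finset.sum_mul]
      refine Finset.sum_congr rfl fun k hk => ?_
      have hkn : k ≤ n := Nat.lt_succ_iff.mp (Finset.mem_range.mp hk)
      rw [show a k * (cGamma (n-k) : ℂ) * y ^ n =
        a k * (cGamma (n-k) : ℂ) * (y ^ k * y ^ (n - k)) from by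
          rw [← pow_add, Nat.add_sub_cancel' hkn]]
      ring
    have hsummable : Summable (fun n => ‖d n * y ^ n‖) := by
      refine (summable_norm_sum_mul_range_of_summable_norm hf hg).congr fun n => ?_
      rw [hterm n]
    refine ⟨?_, hsummable⟩
    rw [Summable.hasSum_iff hsummable.of_norm]
    have := tsum_mul_tsum_eq_tsum_sum_range_of_summable_norm hf hg
    rw [(hsum y hy3).tsum_eq, ((hasSum_cGamma_complex hy1).1).tsum_eq] at this
    rw [this]
    exact tsum_congr fun n => (hterm n).symm
  have hds : Summable fun n => ‖d n‖ * (1/4 : ℝ) ^ n := by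
    have := (cauchy (((1:ℝ)/4 : ℝ) : ℂ) (by rw [Complex.norm_real]; norm_num)).2
    refine this.congr fun n => ?_
    rw [norm_mul, norm_pow, Complex.norm_real]
    norm_num
  have hes4 : Summable fun n : ℕ => ‖(e n : ℂ)‖ * (1/4 : ℝ) ^ n := by
    refine hes.of_nonneg_of_le (fun n => by positivity) fun n => ?_
    have : ((1:ℝ)/4) ^ n ≤ ((1:ℝ)/2) ^ n := pow_le_pow_left₀ (by norm_num) (by norm_num) n
    exact mul_le_mul_of_nonneg_left this (norm_nonneg _)
  have hdeq : d = fun n => (e n : ℂ) :=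
    coeff_eq_of_hasSum (fun y hy => (cauchy y hy).1) hprod hds hes4
  have hcoeff : ∀ n : ℕ, a n = (A n : ℂ) := by
    intro n
    induction n using Nat.strong_induction_on with
    | _ n ih =>
      have hdn : d n = (e n : ℂ) := congrFun hdeq n
      rcases Nat.eq_zero_or_pos n with h0 | h1
      · subst h0
        rw [hdd] at hdn
        have h00 : a 0 = 1 := by simpa [cGamma_zero, he0] using hdn
        simp [h00, hA0]
      · -- recursion for A, reflected
        have hrecn := hrec n h1
        have hreflect : ∑ k ∈ Finset.range (n+1), A k * cGamma (n - k)
            = ∑ i ∈ Finset.range (n+1), A (n - i) * cGamma i := by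
          have := Finset.sum_range_reflect (fun i => A (n - i) * cGamma i) (n+1)
          rw [← this]
          refine Finset.sum_congr rfl fun k hk => ?_
          have hkn : k ≤ n := Nat.lt_succ_iff.mp (Finset.mem_range.mp hk)
          have e1 : n + 1 - 1 - k = n - k := by omega
          rw [e1, Nat.sub_sub_self hkn]
        have hAc : (∑ k ∈ Finset.range (n+1), (A k : ℂ) * (cGamma (n - k) : ℂ)) = (e n : ℂ) := by
          rw [show (e n : ℂ) = ((e n : ℝ) : ℂ) from rfl, ← hrecn, ← hreflect]
          push_cast
          rfl
        rw [hdd] at hdn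
        simp only at hdn
        rw [Finset.sum_range_succ] at hdn hAc
        have hpre : ∑ k ∈ Finset.range n, a k * (cGamma (n - k) : ℂ)
            = ∑ k ∈ Finset.range n, (A k : ℂ) * (cGamma (n - k) : ℂ) :=
          Finset.sum_congr rfl fun k hk => by rw [ih k (Finset.mem_range.mp hk)]
        rw [hpre] at hdn
        have := hdn.trans hAc.symm
        simpa [Nat.sub_self, cGamma_zero] using this
  have hx3 : ‖(x:ℂ)‖ < 3 := by
    rw [Complex.norm_real, Real.norm_eq_abs]; linarith
  exact (hsum x hx3).congr_fun fun n => by rw [hcoeff n]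

lemma Gamma_one_add_ne_zero {y : ℂ} (hy : ‖y‖ < 1/2) : Complex.Gamma (1 + y) ≠ 0 := by
  refine Complex.Gamma_ne_zero fun m hm => ?_
  have : y = -(1 + m) := by linear_combination hm
  rw [this] at hy
  have : ‖(-(1 + m : ℂ))‖ = 1 + m := by
    rw [norm_neg]
    have : ((1 : ℂ) + m) = ((1 + m : ℝ) : ℂ) := by push_cast; ring
    rw [this, Complex.norm_real, Real.norm_eq_abs, abs_of_pos (by positivity)]
  rw [this] at hy
  have : (0:ℝ) ≤ m := Nat.cast_nonneg m
  linarith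

lemma ofReal_hasSum_re {f : ℕ → ℝ} {s : ℝ}
    (h : HasSum (fun j => ((f j : ℂ))) ((s : ℂ))) : HasSum f s := by
  have := Complex.reCLM.hasSum h
  simpa using this

/-- For the sequences `(A_j)`, `(B_j)` determined by `A₀ = B₀ = 1` and the recursions
`∑_{i=0}^{j} A_{j−i} c_i = 0`, `∑_{i=0}^{j} B_{j−i} c_i = (log 2)^j/j!` for `j ≥ 1`, and
for every real `x` with `|x| < 2`, the series `∑ A_j x^j` and `∑ B_j x^j` converge with
`∑_{j=0}^{∞} A_j x^j = 1/Γ(1+x)` and `∑_{j=0}^{∞} B_j x^j = 2^x/Γ(1+x)`. -/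
theorem generating_functions_of_A_B (A B : ℕ → ℝ)
    (hA0 : A 0 = 1) (hB0 : B 0 = 1)
    (hA : ∀ j : ℕ, 1 ≤ j → ∑ i ∈ Finset.range (j + 1), A (j - i) * cGamma i = 0)
    (hB : ∀ j : ℕ, 1 ≤ j →
      ∑ i ∈ Finset.range (j + 1), B (j - i) * cGamma i =
        (Real.log 2) ^ j / (Nat.factorial j : ℝ))
    (x : ℝ) (hx : |x| < 2) :
    HasSum (fun j : ℕ => A j * x ^ j) (1 / Real.Gamma (1 + x)) ∧
    HasSum (fun j : ℕ => B j * x ^ j) ((2 : ℝ) ^ x / Real.Gamma (1 + x)) := by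
  have hgam : ((1:ℂ) + (x:ℂ)) = ((1 + x : ℝ) : ℂ) := by push_cast; ring
  constructor
  · -- A part
    set φ : ℂ → ℂ := fun z => (Complex.Gamma (1 + z))⁻¹ with hφdef
    have hφ : Differentiable ℂ φ := by
      have : φ = (fun s : ℂ => (Complex.Gamma s)⁻¹) ∘ (fun z : ℂ => 1 + z) := rfl
      rw [this]
      exact Complex.differentiable_one_div_Gamma.comp ((differentiable_const 1).add differentiable_id)
    have key := main_aux A (fun n => if n = 0 then 1 else 0) φ hφ hA0 (by simp)
      (fun j hj => by simp [hA j hj, Nat.one_le_iff_ne_zero.mp hj])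
      (fun y hy => by
        have hne := Gamma_one_add_ne_zero hy
        have : φ y * Complex.Gamma (1 + y) = 1 := inv_mul_cancel₀ hne
        rw [this]
        have h0 : ∀ n : ℕ, n ≠ 0 →
            (((if n = 0 then (1:ℝ) else 0) : ℝ) : ℂ) * y ^ n = 0 := by
          intro n hn; simp [hn]
        have := hasSum_single (f := fun n : ℕ =>
          (((if n = 0 then (1:ℝ) else 0) : ℝ) : ℂ) * y ^ n) 0 h0
        simpa using this)
      (by
        refine Summable.of_nonneg_of_le (fun n => by positivity) (fun n => ?_)
          (summable_geometric_of_lt_one (by norm_num) (by norm_num : (1/2:ℝ) < 1))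
        have : ‖(((if n = 0 then (1:ℝ) else 0) : ℝ) : ℂ)‖ ≤ 1 := by
          rcases eq_or_ne n 0 with h|h <;> simp [h]
        calc ‖(((if n = 0 then (1:ℝ) else 0) : ℝ) : ℂ)‖ * (1/2:ℝ)^n
            ≤ 1 * (1/2:ℝ)^n := mul_le_mul_of_nonneg_right this (by positivity)
          _ = (1/2:ℝ)^n := one_mul _)
      x hx
    have hval : φ (x:ℂ) = ((1 / Real.Gamma (1 + x) : ℝ) : ℂ) := by
      rw [hφdef]
      simp only
      rw [hgam, Complex.Gamma_ofReal, ← Complex.ofReal_inv, one_div]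
    rw [hval] at key
    refine ofReal_hasSum_re (key.congr_fun fun j => ?_)
    push_cast
    ring
  · -- B part
    set φ : ℂ → ℂ := fun z => Complex.exp (z * (Real.log 2 : ℂ)) * (Complex.Gamma (1 + z))⁻¹
      with hφdef
    have hφ : Differentiable ℂ φ := by
      refine Differentiable.mul ?_ ?_
      · exact Complex.differentiable_exp.comp (differentiable_id.mul (differentiable_const _))
      · exact Complex.differentiable_one_div_Gamma.comp
          ((differentiable_const 1).add differentiable_id)
    have key := main_aux B (fun n => (Real.log 2) ^ n / (Nat.factorial n : ℝ)) φ hφ hB0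
      (by simp)
      (fun j hj => hB j hj)
      (fun y hy => by
        have hne := Gamma_one_add_ne_zero hy
        have hval : φ y * Complex.Gamma (1 + y) = Complex.exp (y * (Real.log 2 : ℂ)) := by
          rw [hφdef]
          simp only
          rw [mul_assoc, inv_mul_cancel₀ hne, mul_one]
        rw [hval]
        have hexp : HasSum (fun n : ℕ => (y * (Real.log 2 : ℂ)) ^ n / (Nat.factorial n : ℂ))
            (Complex.exp (y * (Real.log 2 : ℂ))) := by
          rw [Complex.exp_eq_exp_ℂ]
          exact NormedSpace.expSeries_div_hasSum_exp _
        refine hexp.congr_fun fun n => ?_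
        push_cast
        rw [mul_pow]
        ring)
      (by
        refine (Real.summable_pow_div_factorial (|Real.log 2| / 2)).congr fun n => ?_
        rw [Complex.norm_real, Real.norm_eq_abs, abs_div, _root_.abs_pow, Nat.abs_cast,
          div_pow]
        field_simp
        ring_nf; rw [← mul_pow]; norm_num)
      x hx
    have hval : φ (x:ℂ) = (((2:ℝ) ^ x / Real.Gamma (1 + x) : ℝ) : ℂ) := by
      rw [hφdef]
      simp only
      rw [hgam, Complex.Gamma_ofReal, ← Complex.ofReal_mul, ← Complex.ofReal_exp,
        show Real.exp (x * Real.log 2) = (2:ℝ) ^ x from by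
          rw [Real.rpow_def_of_pos (by norm_num : (0:ℝ) < 2), mul_comm],
        ← Complex.ofReal_inv, ← Complex.ofReal_mul, ← div_eq_mul_inv]
    rw [hval] at key
    refine ofReal_hasSum_re (key.congr_fun fun j => ?_)
    push_cast
    ring
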